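/- Let X = {x_1,...,x_n} ⊂ ℝ² with centroid M, let x_r ∈ X be farthest from M, let M_r = (1/(n+1))(x_r + Σ_i x_i), and let s* be the minimiser of P(s) = Σ_i ‖s-x_i‖² + max_i ‖s-x_i‖². Then ‖M_r - x_r‖ ≤ ‖s* - x_r‖. -/

import Mathlib

private lemma key_id (a c : EuclideanSpace ℝ (Fin 2)) (l : ℝ) :
    ‖a + l • c‖^2 = (1-l)*‖a‖^2 + l*‖a + c‖^2 - l*(1-l)*‖c‖^2 := by
  have h1 := norm_add_sq_real a (l • c)
  have h2 := norm_add_sq_real a c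
  rw [real_inner_smul_right, norm_smul, Real.norm_eq_abs, mul_pow, sq_abs] at h1
  linear_combination h1 - l * h2

set_option maxHeartbeats 1000000 in
theorem Mr_dist_le_sStar_dist
    {n : ℕ} [NeZero n] (x : Fin n → EuclideanSpace ℝ (Fin 2))
    (M : EuclideanSpace ℝ (Fin 2)) (hM : M = (n : ℝ)⁻¹ • ∑ i, x i)
    (r : Fin n) (hr : ∀ i, ‖M - x i‖ ≤ ‖M - x r‖)
    (Mr : EuclideanSpace ℝ (Fin 2)) (hMr : Mr = ((n : ℝ) + 1)⁻¹ • (x r + ∑ i, x i))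
    (P : EuclideanSpace ℝ (Fin 2) → ℝ)
    (hP : ∀ s, P s = (∑ i, ‖s - x i‖ ^ 2) +
      Finset.univ.sup' Finset.univ_nonempty (fun i => ‖s - x i‖ ^ 2))
    (s : EuclideanSpace ℝ (Fin 2)) (hs : ∀ t, P s ≤ P t) :
    ‖Mr - x r‖ ≤ ‖s - x r‖ := by
  have hn : (0:ℝ) < n := by
    exact_mod_cast Nat.pos_of_ne_zero (NeZero.ne n)
  have hn1 : (0:ℝ) < (n:ℝ) + 1 := by linarith
  have hsum : ∑ i, x i = (n:ℝ) • M := by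
    rw [hM, smul_inv_smul₀ (by positivity)]
  obtain ⟨d, hd⟩ : ∃ d, d = ‖M - x r‖ := ⟨_, rfl⟩
  obtain ⟨u, hu⟩ : ∃ u, u = ‖M - s‖ := ⟨_, rfl⟩
  rw [← hd] at hr
  have hd0 : 0 ≤ d := by rw [hd]; positivity
  have hu0 : 0 ≤ u := by rw [hu]; positivity
  -- centroid cancellation
  have hzero : (∑ i, (M - x i)) = 0 := by
    rw [Finset.sum_sub_distrib, hsum, Finset.sum_const, Finset.card_univ, Fintype.card_fin,
      sub_eq_zero, Nat.cast_smul_eq_nsmul ℝ]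
  -- sum identity: ∑ ‖s - x i‖² = ∑ ‖M - x i‖² + n u²
  have hterm : ∀ i, ‖s - x i‖^2
      = ‖M - x i‖^2 + 2 * inner ℝ (M - x i) (s - M) + u^2 := by
    intro i
    have h : s - x i = (M - x i) + (s - M) := by abel
    rw [h, norm_add_sq_real, hu, norm_sub_rev M s]
  have hsum_s : ∑ i, ‖s - x i‖^2 = (∑ i, ‖M - x i‖^2) + n * u^2 := by
    rw [Finset.sum_congr rfl fun i _ => hterm i]
    rw [Finset.sum_add_distrib, Finset.sum_add_distrib, ← Finset.mul_sum,
      ← sum_inner, hzero]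
    simp [Finset.card_univ, mul_comm]
  -- sup at M
  have hFM : Finset.univ.sup' Finset.univ_nonempty (fun i => ‖M - x i‖^2) = d^2 := by
    apply le_antisymm
    · exact Finset.sup'_le _ (fun i => ‖M - x i‖^2) fun i _ => pow_le_pow_left₀ (norm_nonneg _) (hr i) 2
    · rw [hd]; exact Finset.le_sup' (fun i => ‖M - x i‖^2) (Finset.mem_univ r)
  obtain ⟨F, hF⟩ : ∃ F, F = Finset.univ.sup' Finset.univ_nonempty (fun i => ‖s - x i‖^2) :=
    ⟨_, rfl⟩
  have hFr : ‖s - x r‖^2 ≤ F := hF ▸ Finset.le_sup' (fun i => ‖s - x i‖^2) (Finset.mem_univ r)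
  -- triangle: |d - u| ≤ ‖s - x r‖
  have htri : d - u ≤ ‖s - x r‖ := by
    have h := abs_norm_sub_norm_le (M - x r) (M - s)
    have he : (M - x r) - (M - s) = s - x r := by abel
    rw [he, ← hd, ← hu] at h
    calc d - u ≤ |d - u| := le_abs_self _
    _ ≤ ‖s - x r‖ := h
  have htri2 : (d - u)^2 ≤ ‖s - x r‖^2 := by
    have h := abs_norm_sub_norm_le (M - x r) (M - s)
    have he : (M - x r) - (M - s) = s - x r := by abel
    rw [he, ← hd, ← hu] at h
    nlinarith [sq_abs (d - u), abs_nonneg (d - u), norm_nonneg (s - x r)]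
  -- strong convexity comparison with M
  obtain ⟨C, hC⟩ : ∃ C, C = P M - P s := ⟨_, rfl⟩
  have hkey : ∀ l : ℝ, 0 < l → l ≤ 1 → ((n:ℝ)+1) * (1-l) * u^2 ≤ C := by
    intro l hl0 hl1
    obtain ⟨t, ht⟩ : ∃ t, t = s + l • (M - s) := ⟨_, rfl⟩
    have hti : ∀ i, ‖t - x i‖^2
        = (1-l)*‖s - x i‖^2 + l*‖M - x i‖^2 - l*(1-l)*u^2 := by
      intro i
      have h1 : t - x i = (s - x i) + l • (M - s) := by rw [ht]; abel
      have h2 : (s - x i) + (M - s) = M - x i := by abel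
      rw [h1, key_id, h2, hu, norm_sub_rev M s]
    have hsupt : Finset.univ.sup' Finset.univ_nonempty (fun i => ‖t - x i‖^2)
        ≤ (1-l)*F + l*d^2 - l*(1-l)*u^2 := by
      apply Finset.sup'_le
      intro i _
      rw [hti i]
      have h3 : ‖s - x i‖^2 ≤ F := hF ▸ Finset.le_sup' (fun i => ‖s - x i‖^2) (Finset.mem_univ i)
      have h4 : ‖M - x i‖^2 ≤ d^2 := pow_le_pow_left₀ (norm_nonneg _) (hr i) 2
      nlinarith
    have hsumt : ∑ i, ‖t - x i‖^2
        = (1-l)*(∑ i, ‖s - x i‖^2) + l*(∑ i, ‖M - x i‖^2) - n*(l*(1-l)*u^2) := by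
      rw [Finset.sum_congr rfl fun i _ => hti i]
      rw [Finset.sum_sub_distrib, Finset.sum_add_distrib, ← Finset.mul_sum, ← Finset.mul_sum]
      simp [Finset.card_univ, mul_comm]
    have hPt : P t ≤ (1-l)*(P s) + l*(P M) - ((n:ℝ)+1)*(l*(1-l)*u^2) := by
      rw [hP t, hP s, hP M, hFM, hsumt, ← hF]
      nlinarith [hsupt]
    have h5 : l * (((n:ℝ)+1) * (1-l) * u^2) ≤ l * C := by
      rw [hC]
      linarith [hs t, hPt]
    exact le_of_mul_le_mul_left h5 hl0
  have hC0 : 0 ≤ C := by have := hkey 1 one_pos le_rfl; simpa using this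
  have hmain : ((n:ℝ)+1) * u^2 ≤ C := by
    by_contra hcon
    push_neg at hcon
    have hK : 0 < ((n:ℝ)+1) * u^2 := lt_of_le_of_lt hC0 hcon
    obtain ⟨D, hD⟩ : ∃ D, D = (((n:ℝ)+1) * u^2 - C) / (2 * (((n:ℝ)+1) * u^2)) := ⟨_, rfl⟩
    have hD0 : 0 < D := by rw [hD]; apply div_pos <;> nlinarith
    have hD1 : D ≤ 1 := by
      rw [hD, div_le_one (by nlinarith)]
      nlinarith
    have hl := hkey D hD0 hD1
    have hident : ((n:ℝ)+1)*(1 - D)*u^2 = (((n:ℝ)+1)*u^2 + C)/2 := by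
      rw [hD]
      have hu2 : u ≠ 0 := by rintro rfl; simp at hK
      have hn2 : (n:ℝ) + 1 ≠ 0 := hn1.ne'
      field_simp
      ring
    rw [hident] at hl
    linarith
  -- from strong convexity: (n+1)u² ≤ C = d² - n u² - F ≤ d² - n u² - (d-u)²
  have hCval : C ≤ d^2 - n * u^2 - (d - u)^2 := by
    rw [hC, hP M, hP s, hFM, hsum_s, ← hF]
    nlinarith [le_trans htri2 hFr]
  have huu : ((n:ℝ)+1) * u ≤ d := by
    rcases eq_or_lt_of_le hu0 with h | h
    · rw [← h]; simpa using hd0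
    · nlinarith [hmain, hCval]
  -- Mr - x r = (n/(n+1)) • (M - x r)
  have hMrx : Mr - x r = ((n:ℝ)/((n:ℝ)+1)) • (M - x r) := by
    rw [hMr, hsum]
    match_scalars <;> field_simp <;> ring
  have hMrn : ‖Mr - x r‖ = (n:ℝ)/((n:ℝ)+1) * d := by
    rw [hMrx, norm_smul, Real.norm_eq_abs, abs_of_nonneg (by positivity), ← hd]
  rw [hMrn]
  have h1 : (n:ℝ)/((n:ℝ)+1) * d ≤ d - u := by
    rw [div_mul_eq_mul_div, div_le_iff₀ hn1]
    nlinarith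
  linarith
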